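/- There exists a universal constant C such that for every integer d ≥ 0, every d-ISLP of size g generating a string T, and every nonempty string T' obtained from T by a single edit operation (substitution of one character, insertion of one character, or deletion of one character), there exists a d-ISLP of size at most C·g generating T'. -/

import Mathlib

/-- Rules of an iterated SLP over alphabet `α` with variables `Fin N`. -/
inductive ISLPRule (α : Type) (N : ℕ) : Type
  | term (a : α)
  | pair (B C : Fin N)
  | iter (k1 k2 : ℕ) (Bs : List (Fin N × ℕ))

namespace ISLPRule

variable {α : Type} {N : ℕ}

/-- Variables occurring in the right-hand side of a rule. -/
def vars : ISLPRule α N → List (Fin N)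
  | .term _ => []
  | .pair B C => [B, C]
  | .iter _ _ Bs => Bs.map Prod.fst

/-- The size of a rule: 1 for `A → a`, 2 for `A → BC`, `2 + 2t` for iteration rules. -/
def size : ISLPRule α N → ℕ
  | .term _ => 1
  | .pair _ _ => 2
  | .iter _ _ Bs => 2 + 2 * Bs.length

/-- Validity of a rule in a `d`-ISLP: in iteration rules, `k1, k2 ≥ 1`,
`t ≥ 1` and all exponents `c_j` satisfy `c_j ≤ d`. -/
def Ok (d : ℕ) : ISLPRule α N → Prop
  | .term _ => True
  | .pair _ _ => True
  | .iter k1 k2 Bs => 1 ≤ k1 ∧ 1 ≤ k2 ∧ Bs ≠ [] ∧ ∀ p ∈ Bs, p.2 ≤ d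

/-- A rule is an SLP rule if it is of the form `A → a` or `A → BC`. -/
def isSLP : ISLPRule α N → Prop
  | .term _ => True
  | .pair _ _ => True
  | .iter _ _ _ => False

end ISLPRule

/-- `w` repeated `k` times, i.e. `w^k`. -/
def repList {α : Type} (w : List α) (k : ℕ) : List α := (List.replicate k w).flatten

/-- The list `k1, k1±1, …, k2` (increasing if `k1 ≤ k2`, decreasing if `k1 > k2`). -/
def rangeK (k1 k2 : ℕ) : List ℕ :=
  if k1 ≤ k2 then (List.range (k2 + 1 - k1)).map (k1 + ·)
  else (List.range (k1 + 1 - k2)).map (k1 - ·)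

/-- Expansion of one block `w_1^{i^{c_1}} ⋯ w_t^{i^{c_t}}`, where
`ps = [(w_1, c_1), …, (w_t, c_t)]`. -/
def iterBlock {α : Type} (ps : List (List α × ℕ)) (i : ℕ) : List α :=
  (ps.map (fun p => repList p.1 (i ^ p.2))).flatten

/-- Expansion of `∏_{i=k1}^{k2} w_1^{i^{c_1}} ⋯ w_t^{i^{c_t}}`. -/
def iterExpand {α : Type} (k1 k2 : ℕ) (ps : List (List α × ℕ)) : List α :=
  ((rangeK k1 k2).map (iterBlock ps)).flatten

/-- A `d`-ISLP: variables `Fin N`, exactly one valid rule per variable, a start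
variable, and acyclicity (variables are topologically ordered: every variable
occurring in the rule of `A` is smaller than `A`). -/
structure ISLP (α : Type) (d : ℕ) : Type where
  N : ℕ
  rule : Fin N → ISLPRule α N
  start : Fin N
  ok : ∀ A, (rule A).Ok d
  acyclic : ∀ A, ∀ B ∈ (rule A).vars, B < A

namespace ISLP

/-- `Expands rule A w` holds iff the (unique) expansion of variable `A` is `w`. -/
inductive Expands {α : Type} {N : ℕ} (rule : Fin N → ISLPRule α N) : Fin N → List α → Prop
  | term {A : Fin N} {a : α} : rule A = .term a → Expands rule A [a]
  | pair {A B C : Fin N} {u v : List α} : rule A = .pair B C →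
      Expands rule B u → Expands rule C v → Expands rule A (u ++ v)
  | iter {A : Fin N} {k1 k2 : ℕ} {Bs : List (Fin N × ℕ)} {ps : List (List α × ℕ)} :
      rule A = .iter k1 k2 Bs →
      ps.map Prod.snd = Bs.map Prod.snd →
      (∀ q ∈ Bs.zip ps, Expands rule q.1.1 q.2.1) →
      Expands rule A (iterExpand k1 k2 ps)

variable {α : Type} {d : ℕ}

/-- The ISLP `G` generates the string `T`. -/
def Generates (G : ISLP α d) (T : List α) : Prop := Expands G.rule G.start T

/-- The size of an ISLP: the sum of the sizes of its rules. -/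
def size (G : ISLP α d) : ℕ := ∑ A : Fin G.N, (G.rule A).size

end ISLP

/-- `g_{it(d)}(T)`: the minimum size of a `d`-ISLP generating `T`. -/
noncomputable def gIt (α : Type) (d : ℕ) (T : List α) : ℕ :=
  sInf {g : ℕ | ∃ G : ISLP α d, G.Generates T ∧ G.size = g}

/-- `T'` is obtained from `T` by a single edit operation: substitution,
insertion, or deletion of one character. -/
def IsEdit {α : Type} (T T' : List α) : Prop :=
  (∃ (u v : List α) (x y : α), T = u ++ x :: v ∧ T' = u ++ y :: v) ∨
  (∃ (u v : List α) (y : α), T = u ++ v ∧ T' = u ++ y :: v) ∨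
  (∃ (u v : List α) (x : α), T = u ++ x :: v ∧ T' = u ++ v)
section Aux
variable {α : Type}

@[simp] lemma repList_zero (w : List α) : repList w 0 = [] := rfl
@[simp] lemma repList_succ (w : List α) (k : ℕ) : repList w (k+1) = w ++ repList w k := by
  simp [repList, List.replicate_succ]
@[simp] lemma repList_one (w : List α) : repList w 1 = w := by simp
@[simp] lemma repList_nil (k : ℕ) : repList ([] : List α) k = [] := by
  induction k with
  | zero => rfl
  | succ k ih => simp [ih]

@[simp] lemma rangeK_length (k1 k2 : ℕ) :
    (rangeK k1 k2).length = if k1 ≤ k2 then k2 + 1 - k1 else k1 + 1 - k2 := by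
  unfold rangeK; split <;> simp

lemma rangeK_getElem (k1 k2 m : ℕ) (h : m < (rangeK k1 k2).length) :
    (rangeK k1 k2)[m] = if k1 ≤ k2 then k1 + m else k1 - m := by
  unfold rangeK at *; split <;> simp_all

@[simp] lemma rangeK_single (k : ℕ) : rangeK k k = [k] := by
  simp [rangeK, List.range_succ]

lemma rangeK_ne_nil (k1 k2 : ℕ) : rangeK k1 k2 ≠ [] := by
  intro h
  have h2 : (rangeK k1 k2).length = 0 := by rw [h]; rfl
  rw [rangeK_length] at h2
  split at h2 <;> omega

lemma rangeK_decomp (k1 k2 j : ℕ) (hk1 : 1 ≤ k1) (hk2 : 1 ≤ k2)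
    (hj : j < (rangeK k1 k2).length) :
    1 ≤ (rangeK k1 k2)[j] ∧
    ((rangeK k1 k2).take j = [] ∨
      ∃ a b, 1 ≤ a ∧ 1 ≤ b ∧ (rangeK k1 k2).take j = rangeK a b) ∧
    ((rangeK k1 k2).drop (j+1) = [] ∨
      ∃ a b, 1 ≤ a ∧ 1 ≤ b ∧ (rangeK k1 k2).drop (j+1) = rangeK a b) := by
  have hlen := rangeK_length k1 k2
  have hel := rangeK_getElem k1 k2 j hj
  rw [hlen] at hj
  by_cases hk : k1 ≤ k2
  · simp only [hk, if_true] at hel hj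
    refine ⟨by omega, ?_, ?_⟩
    · rcases Nat.eq_zero_or_pos j with hj0 | hj0
      · left; simp [hj0]
      · right
        refine ⟨k1, k1 + j - 1, hk1, by omega, ?_⟩
        apply List.ext_getElem
        · simp only [List.length_take, rangeK_length]
          split_ifs <;> omega
        · intro m h1 h2
          simp only [List.length_take, rangeK_length] at h1 h2
          rw [List.getElem_take, rangeK_getElem, rangeK_getElem]
          split_ifs at h1 h2 ⊢ <;> omega
    · by_cases hlast : j + 1 < k2 + 1 - k1
      · right
        refine ⟨k1 + j + 1, k2, by omega, hk2, ?_⟩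
        apply List.ext_getElem
        · simp only [List.length_drop, rangeK_length]
          split_ifs <;> omega
        · intro m h1 h2
          simp only [List.length_drop, rangeK_length] at h1 h2
          rw [List.getElem_drop, rangeK_getElem, rangeK_getElem]
          split_ifs at h1 h2 ⊢ <;> omega
      · left
        apply List.drop_eq_nil_of_le
        rw [rangeK_length, if_pos hk]
        omega
  · simp only [hk, if_false] at hel hj
    refine ⟨by omega, ?_, ?_⟩
    · rcases Nat.eq_zero_or_pos j with hj0 | hj0
      · left; simp [hj0]
      · right
        refine ⟨k1, k1 - j + 1, hk1, by omega, ?_⟩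
        apply List.ext_getElem
        · simp only [List.length_take, rangeK_length]
          split_ifs <;> omega
        · intro m h1 h2
          simp only [List.length_take, rangeK_length] at h1 h2
          rw [List.getElem_take, rangeK_getElem, rangeK_getElem]
          split_ifs at h1 h2 ⊢ <;> omega
    · by_cases hlast : j + 1 < k1 + 1 - k2
      · right
        refine ⟨k1 - j - 1, k2, by omega, hk2, ?_⟩
        apply List.ext_getElem
        · simp only [List.length_drop, rangeK_length]
          split_ifs <;> omega
        · intro m h1 h2
          simp only [List.length_drop, rangeK_length] at h1 h2
          rw [List.getElem_drop, rangeK_getElem, rangeK_getElem]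
          split_ifs at h1 h2 ⊢ <;> omega
      · left
        apply List.drop_eq_nil_of_le
        rw [rangeK_length, if_neg hk]
        omega

lemma flatten_split (Ls : List (List α)) (n : ℕ) (hne : Ls ≠ [])
    (hn : n ≤ Ls.flatten.length) :
    ∃ j, ∃ hj : j < Ls.length, ∃ m, m ≤ Ls[j].length ∧
      Ls.flatten.take n = (Ls.take j).flatten ++ Ls[j].take m ∧
      Ls.flatten.drop n = Ls[j].drop m ++ (Ls.drop (j+1)).flatten := by
  induction Ls generalizing n with
  | nil => exact absurd rfl hne
  | cons w Ls' ih =>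
    by_cases hw : n ≤ w.length
    · refine ⟨0, by simp, n, hw, ?_, ?_⟩
      · simp [List.take_append_of_le_length hw]
      · simp [List.drop_append_of_le_length hw]
    · push_neg at hw
      have hLs' : Ls' ≠ [] := by
        rintro rfl
        simp at hn
        omega
      have hlen : (w :: Ls').flatten.length = w.length + Ls'.flatten.length := by simp
      have hn' : n - w.length ≤ Ls'.flatten.length := by omega
      obtain ⟨j, hj, m, hm, h1, h2⟩ := ih (n - w.length) hLs' hn'
      refine ⟨j + 1, by simpa using hj, m, by simpa using hm, ?_, ?_⟩
      · show (w ++ Ls'.flatten).take n = _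
        rw [List.take_append, List.take_of_length_le (by omega)]
        simp only [List.take_succ_cons, List.flatten_cons, List.getElem_cons_succ]
        rw [h1, List.append_assoc]
      · show (w ++ Ls'.flatten).drop n = _
        rw [List.drop_append, List.drop_eq_nil_of_le (by omega)]
        simp only [List.drop_succ_cons, List.getElem_cons_succ, List.nil_append]
        exact h2

lemma repList_split (w : List α) (e n : ℕ) (he : 1 ≤ e) (hn : n ≤ (repList w e).length) :
    ∃ j m, j < e ∧ m ≤ w.length ∧
      (repList w e).take n = repList w j ++ w.take m ∧
      (repList w e).drop n = w.drop m ++ repList w (e - j - 1) := by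
  have hrep : repList w e = (List.replicate e w).flatten := rfl
  have hne : (List.replicate e w) ≠ [] := by
    simp only [ne_eq, List.replicate_eq_nil_iff]
    omega
  obtain ⟨j, hj, m, hm, h1, h2⟩ := flatten_split (List.replicate e w) n hne (by rwa [← hrep])
  simp only [List.length_replicate] at hj
  simp only [List.getElem_replicate] at hm h1 h2
  refine ⟨j, m, hj, hm, ?_, ?_⟩
  · rw [hrep, h1, List.take_replicate, min_eq_left (by omega)]
    rfl
  · rw [hrep, h2, List.drop_replicate]
    rfl
end Aux
section ExpandsAux
variable {α : Type} {N : ℕ} {d : ℕ}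

lemma expands_unique {rule : Fin N → ISLPRule α N} {A : Fin N} {w : List α}
    (h : ISLP.Expands rule A w) : ∀ w', ISLP.Expands rule A w' → w = w' := by
  induction h with
  | @term A a hA =>
    intro w' h'
    cases h' with
    | term hA' => rw [hA] at hA'; cases hA'; rfl
    | pair hA' _ _ => rw [hA] at hA'; cases hA'
    | iter hA' _ _ => rw [hA] at hA'; cases hA'
  | @pair A B C u v hA hu hv ihu ihv =>
    intro w' h'
    cases h' with
    | term hA' => rw [hA] at hA'; cases hA'
    | @pair _ B' C' u' v' hA' hu' hv' =>
      rw [hA] at hA'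
      injection hA' with e1 e2
      subst e1; subst e2
      rw [ihu u' hu', ihv v' hv']
    | iter hA' _ _ => rw [hA] at hA'; cases hA'
  | @iter A k1 k2 Bs ps hA hsnd hzip ih =>
    intro w' h'
    cases h' with
    | term hA' => rw [hA] at hA'; cases hA'
    | pair hA' _ _ => rw [hA] at hA'; cases hA'
    | @iter _ k1' k2' Bs' ps' hA' hsnd' hzip' =>
      rw [hA] at hA'
      injection hA' with e1 e2 e3
      subst e1; subst e2; subst e3
      have hl : ps.length = Bs.length := by
        have := congrArg List.length hsnd; simpa using this
      have hl' : ps'.length = Bs.length := by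
        have := congrArg List.length hsnd'; simpa using this
      have hps : ps = ps' := by
        apply List.ext_getElem (by omega)
        intro i h1 h2
        have hiB : i < Bs.length := by omega
        have hmem : (Bs[i], ps[i]) ∈ Bs.zip ps := by
          have : (Bs.zip ps)[i]'(by simp [List.length_zip]; omega) = (Bs[i], ps[i]) :=
            List.getElem_zip
          rw [← this]; exact List.getElem_mem _
        have hmem' : (Bs[i], ps'[i]) ∈ Bs.zip ps' := by
          have : (Bs.zip ps')[i]'(by simp [List.length_zip]; omega) = (Bs[i], ps'[i]) :=
            List.getElem_zip
          rw [← this]; exact List.getElem_mem _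
        have hfst : ps[i].1 = ps'[i].1 := ih _ hmem _ (hzip' _ hmem')
        have hsnd1 : ps[i].2 = Bs[i].2 := by
          have := congrArg (fun l => l[i]?) hsnd
          simpa [List.getElem?_map, List.getElem?_eq_getElem, h1, hiB] using this
        have hsnd2 : ps'[i].2 = Bs[i].2 := by
          have := congrArg (fun l => l[i]?) hsnd'
          simpa [List.getElem?_map, List.getElem?_eq_getElem, h2, hiB] using this
        exact Prod.ext hfst (by rw [hsnd1, hsnd2])
      rw [hps]

lemma expands_exists (G : ISLP α d) : ∀ A, ∃ w, ISLP.Expands G.rule A w := by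
  suffices H : ∀ n, ∀ A : Fin G.N, A.val < n → ∃ w, ISLP.Expands G.rule A w by
    exact fun A => H (A.val + 1) A (Nat.lt_succ_self _)
  intro n
  induction n with
  | zero => intro A hA; omega
  | succ n ih =>
    intro A hA
    rcases hR : G.rule A with a | ⟨B, C⟩ | ⟨k1, k2, Bs⟩
    · exact ⟨[a], .term hR⟩
    · have hB : B < A := G.acyclic A B (by simp [hR, ISLPRule.vars])
      have hC : C < A := G.acyclic A C (by simp [hR, ISLPRule.vars])
      obtain ⟨u, hu⟩ := ih B (by omega)
      obtain ⟨v, hv⟩ := ih C (by omega)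
      exact ⟨u ++ v, .pair hR hu hv⟩
    · have hBs : ∀ p ∈ Bs, ∃ w, ISLP.Expands G.rule p.1 w := by
        intro p hp
        have : p.1 < A := G.acyclic A p.1
          (by simp only [hR, ISLPRule.vars]; exact List.mem_map_of_mem hp)
        exact ih p.1 (by omega)
      classical
      set F : Fin G.N → List α :=
        fun B => if h : ∃ w, ISLP.Expands G.rule B w then h.choose else [] with hF
      refine ⟨_, .iter (ps := Bs.map (fun p => (F p.1, p.2))) hR ?_ ?_⟩
      · rw [List.map_map]; rfl
      · intro q hq
        obtain ⟨i, hi, hq⟩ := List.getElem_of_mem hq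
        have hiB : i < Bs.length := by
          simp [List.length_zip] at hi; omega
        have : (Bs.zip (Bs.map fun p => (F p.1, p.2)))[i]'hi =
            (Bs[i], (F Bs[i].1, Bs[i].2)) := by
          rw [List.getElem_zip]; simp
        rw [← hq, this]
        have hex := hBs Bs[i] (List.getElem_mem hiB)
        simp only [hF, dif_pos hex]
        exact hex.choose_spec

noncomputable def expOf (G : ISLP α d) (A : Fin G.N) : List α :=
  (expands_exists G A).choose

lemma expOf_spec (G : ISLP α d) (A : Fin G.N) : ISLP.Expands G.rule A (expOf G A) :=
  (expands_exists G A).choose_spec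

lemma expOf_eq {G : ISLP α d} {A : Fin G.N} {w : List α}
    (h : ISLP.Expands G.rule A w) : expOf G A = w :=
  expands_unique (expOf_spec G A) w h
end ExpandsAux
section Programs
variable {α : Type} {d : ℕ} {N : ℕ}

lemma zip_getElem_mem {β γ : Type*} {l1 : List β} {l2 : List γ} {i : ℕ}
    (h1 : i < l1.length) (h2 : i < l2.length) : (l1[i], l2[i]) ∈ l1.zip l2 := by
  have : (l1.zip l2)[i]'(by simp [List.length_zip]; omega) = (l1[i], l2[i]) :=
    List.getElem_zip
  rw [← this]; exact List.getElem_mem _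

lemma mem_zip_index {β γ : Type*} {l1 : List β} {l2 : List γ} {q : β × γ}
    (h : q ∈ l1.zip l2) : ∃ i, ∃ h1 : i < l1.length, ∃ h2 : i < l2.length,
      q.1 = l1[i] ∧ q.2 = l2[i] := by
  obtain ⟨i, hi, hq⟩ := List.getElem_of_mem h
  have h1 : i < l1.length := by simp [List.length_zip] at hi; omega
  have h2 : i < l2.length := by simp [List.length_zip] at hi; omega
  refine ⟨i, h1, h2, ?_, ?_⟩ <;> rw [← hq, List.getElem_zip]

inductive PR (α : Type) : Type
  | term (a : α)
  | pair (B C : ℕ)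
  | iter (k1 k2 : ℕ) (Bs : List (ℕ × ℕ))

namespace PR

def pvars : PR α → List ℕ
  | .term _ => []
  | .pair B C => [B, C]
  | .iter _ _ Bs => Bs.map Prod.fst

def psize : PR α → ℕ
  | .term _ => 1
  | .pair _ _ => 2
  | .iter _ _ Bs => 2 + 2 * Bs.length

def pok (d : ℕ) : PR α → Prop
  | .term _ => True
  | .pair _ _ => True
  | .iter k1 k2 Bs => 1 ≤ k1 ∧ 1 ≤ k2 ∧ Bs ≠ [] ∧ ∀ p ∈ Bs, p.2 ≤ d

end PR

def progSize (L : List (PR α)) : ℕ := (L.map PR.psize).sum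

@[simp] lemma progSize_nil : progSize ([] : List (PR α)) = 0 := rfl

@[simp] lemma progSize_append (L L' : List (PR α)) :
    progSize (L ++ L') = progSize L + progSize L' := by
  simp [progSize]

def PValid (d : ℕ) (L : List (PR α)) : Prop :=
  ∀ j, ∀ hj : j < L.length, (∀ v ∈ (L[j]).pvars, v < j) ∧ (L[j]).pok d

lemma pvalid_append {L : List (PR α)} {r : PR α} (h : PValid d L)
    (hv : ∀ v ∈ r.pvars, v < L.length) (hok : r.pok d) : PValid d (L ++ [r]) := by
  intro j hj
  rcases Nat.lt_or_ge j L.length with hj' | hj'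
  · rw [List.getElem_append_left hj']
    exact h j hj'
  · have hjl : j = L.length := by simp at hj; omega
    subst hjl
    rw [List.getElem_append_right (le_refl _)]
    simpa using ⟨hv, hok⟩

inductive PExpands (L : List (PR α)) : ℕ → List α → Prop
  | term {j : ℕ} {a : α} : L[j]? = some (.term a) → PExpands L j [a]
  | pair {j B C : ℕ} {u v : List α} : L[j]? = some (.pair B C) →
      PExpands L B u → PExpands L C v → PExpands L j (u ++ v)
  | iter {j k1 k2 : ℕ} {Bs : List (ℕ × ℕ)} {ps : List (List α × ℕ)} :
      L[j]? = some (.iter k1 k2 Bs) →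
      ps.map Prod.snd = Bs.map Prod.snd →
      (∀ q ∈ Bs.zip ps, PExpands L q.1.1 q.2.1) →
      PExpands L j (iterExpand k1 k2 ps)

lemma PExpands.mono {L L' : List (PR α)} {j : ℕ} {w : List α}
    (h : PExpands L j w) : PExpands (L ++ L') j w := by
  have key : ∀ (i : ℕ) (r : PR α), L[i]? = some r → (L ++ L')[i]? = some r := by
    intro i r hr
    have hi : i < L.length := by
      by_contra hlt
      rw [List.getElem?_eq_none (by omega)] at hr
      cases hr
    rw [List.getElem?_append_left hi]
    exact hr
  induction h with
  | term hA => exact .term (key _ _ hA)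
  | pair hA hu hv ihu ihv => exact .pair (key _ _ hA) ihu ihv
  | iter hA hsnd hzip ih => exact .iter (key _ _ hA) hsnd (fun q hq => ih q hq)

/-- Convert a valid `PR` rule into an `ISLPRule` over `Fin N`. -/
def prToRule (r : PR α) (h : ∀ v ∈ r.pvars, v < N) : ISLPRule α N :=
  match r, h with
  | .term a, _ => .term a
  | .pair B C, h => .pair ⟨B, h B (by simp [PR.pvars])⟩ ⟨C, h C (by simp [PR.pvars])⟩
  | .iter k1 k2 Bs, h => .iter k1 k2 (Bs.attach.map fun p =>
      (⟨p.1.1, h p.1.1 (List.mem_map_of_mem (f := Prod.fst) p.2)⟩, p.1.2))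

lemma prToRule_size (r : PR α) (h : ∀ v ∈ r.pvars, v < N) :
    (prToRule r h).size = r.psize := by
  cases r <;> simp [prToRule, ISLPRule.size, PR.psize]

lemma prToRule_vars_val (r : PR α) (h : ∀ v ∈ r.pvars, v < N) :
    (prToRule r h).vars.map Fin.val = r.pvars := by
  cases r with
  | term a => rfl
  | pair B C => rfl
  | iter k1 k2 Bs =>
    simp only [prToRule, ISLPRule.vars, PR.pvars, List.map_map]
    rw [← List.attach_map_val (l := Bs) (f := Prod.fst)]
    rfl

lemma prToRule_ok (r : PR α) (h : ∀ v ∈ r.pvars, v < N) (hok : r.pok d) :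
    (prToRule r h).Ok d := by
  cases r with
  | term a => trivial
  | pair B C => trivial
  | iter k1 k2 Bs =>
    obtain ⟨h1, h2, h3, h4⟩ := hok
    refine ⟨h1, h2, ?_, ?_⟩
    · simp [prToRule, h3]
    · intro p hp
      simp only [prToRule, List.mem_map] at hp
      obtain ⟨q, hq, rfl⟩ := hp
      exact h4 q.1 q.2

lemma prToRule_term {r : PR α} {a : α} (e : r = .term a) (h : ∀ v ∈ r.pvars, v < N) :
    prToRule r h = .term a := by subst e; rfl

lemma prToRule_pair {r : PR α} {B C : ℕ} (e : r = .pair B C) (h : ∀ v ∈ r.pvars, v < N)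
    (hB : B < N) (hC : C < N) : prToRule r h = .pair ⟨B, hB⟩ ⟨C, hC⟩ := by subst e; rfl

lemma prToRule_iter {r : PR α} {k1 k2 : ℕ} {Bs : List (ℕ × ℕ)} (e : r = .iter k1 k2 Bs)
    (h : ∀ v ∈ r.pvars, v < N) :
    ∃ Bs' : List (Fin N × ℕ), prToRule r h = .iter k1 k2 Bs' ∧
      Bs'.map (fun q => (q.1.val, q.2)) = Bs := by
  subst e
  refine ⟨_, rfl, ?_⟩
  rw [List.map_map]
  apply List.ext_getElem
  · simp
  · intro i h1 h2
    simp

/-- The ISLP obtained from a valid program. -/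
def toISLP (d : ℕ) (L : List (PR α)) (hv : PValid d L) (s : ℕ) (hs : s < L.length) :
    ISLP α d where
  N := L.length
  rule A := prToRule (L[A.val]) (fun v hv' => lt_trans ((hv A.val A.isLt).1 v hv') A.isLt)
  start := ⟨s, hs⟩
  ok A := prToRule_ok _ _ (hv A.val A.isLt).2
  acyclic A B hB := by
    have : B.val ∈ (L[A.val]).pvars := by
      rw [← prToRule_vars_val (L[A.val])
        (fun v hv' => lt_trans ((hv A.val A.isLt).1 v hv') A.isLt)]
      exact List.mem_map_of_mem (f := Fin.val) hB
    exact (hv A.val A.isLt).1 B.val this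

lemma toISLP_size (d : ℕ) (L : List (PR α)) (hv : PValid d L) (s : ℕ) (hs : s < L.length) :
    (toISLP d L hv s hs).size = progSize L := by
  unfold ISLP.size progSize
  rw [show L.map PR.psize = List.ofFn (fun i : Fin L.length => (L[i.val]).psize) by
    apply List.ext_getElem <;> simp]
  rw [List.sum_ofFn]
  exact Finset.sum_congr rfl fun A _ => prToRule_size _ _

lemma toISLP_expands (d : ℕ) (L : List (PR α)) (hv : PValid d L) (s : ℕ)
    (hs : s < L.length) {j : ℕ} {w : List α} (h : PExpands L j w) (hj : j < L.length) :
    ISLP.Expands (toISLP d L hv s hs).rule ⟨j, hj⟩ w := by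
  induction h with
  | @term j a hA =>
    have hjl : j < L.length := by
      by_contra hlt
      rw [List.getElem?_eq_none (by omega)] at hA
      cases hA
    have he : L[j] = .term a := by
      rw [List.getElem?_eq_getElem hjl] at hA
      exact Option.some_injective _ hA
    exact .term (prToRule_term he _)
  | @pair j B C u v hA hu hv' ihu ihv =>
    have hjl : j < L.length := by
      by_contra hlt
      rw [List.getElem?_eq_none (by omega)] at hA
      cases hA
    have he : L[j] = .pair B C := by
      rw [List.getElem?_eq_getElem hjl] at hA
      exact Option.some_injective _ hA
    have hB : B < j := by
      have := (hv j hjl).1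
      rw [he] at this
      exact this B (by simp [PR.pvars])
    have hC : C < j := by
      have := (hv j hjl).1
      rw [he] at this
      exact this C (by simp [PR.pvars])
    exact .pair (prToRule_pair he _ (by omega) (by omega)) (ihu (by omega)) (ihv (by omega))
  | @iter j k1 k2 Bs ps hA hsnd hzip ih =>
    have hjl : j < L.length := by
      by_contra hlt
      rw [List.getElem?_eq_none (by omega)] at hA
      cases hA
    have he : L[j] = .iter k1 k2 Bs := by
      rw [List.getElem?_eq_getElem hjl] at hA
      exact Option.some_injective _ hA
    obtain ⟨Bs', hBs', hproj⟩ := prToRule_iter he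
      (fun v hv' => lt_trans ((hv j hjl).1 v hv') hjl)
    have hlen : Bs'.length = Bs.length := by
      have := congrArg List.length hproj; simpa using this
    have hlenps : ps.length = Bs.length := by
      have := congrArg List.length hsnd; simpa using this
    refine .iter (ps := ps) hBs' ?_ ?_
    · rw [hsnd, ← hproj, List.map_map]; rfl
    · intro q hq
      obtain ⟨i, h1, h2, hq1, hq2⟩ := mem_zip_index hq
      have hiB : i < Bs.length := by omega
      have hval : (Bs'[i].1 : ℕ) = Bs[i].1 := by
        have h4 : (List.map (fun q => ((q.1 : ℕ), q.2)) Bs')[i]'(by rw [List.length_map]; exact h1) =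
            Bs[i]'hiB := by
          simp only [hproj]
        rw [List.getElem_map] at h4
        exact congrArg Prod.fst h4
      have hmem : (Bs[i], ps[i]) ∈ Bs.zip ps := zip_getElem_mem hiB (by omega)
      have hBlt : Bs[i].1 < L.length := by
        have hthis := (hv j hjl).1
        rw [he] at hthis
        have hBin : Bs[i].1 < j := hthis _ (List.mem_map_of_mem (f := Prod.fst) (List.getElem_mem hiB))
        omega
      have hexp := ih _ hmem (show Bs[i].1 < L.length from hBlt)
      have hfin : q.1.1 = (⟨Bs[i].1, hBlt⟩ : Fin L.length) :=
        Fin.ext (by rw [hq1]; exact hval)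
      rw [hfin, hq2]
      exact hexp

/-- Convert an ISLP rule to a `PR` rule. -/
def fromRule : ISLPRule α N → PR α
  | .term a => .term a
  | .pair B C => .pair B.val C.val
  | .iter k1 k2 Bs => .iter k1 k2 (Bs.map fun p => (p.1.val, p.2))

def ofISLP (G : ISLP α d) : List (PR α) := List.ofFn (fun A : Fin G.N => fromRule (G.rule A))

@[simp] lemma ofISLP_length (G : ISLP α d) : (ofISLP G).length = G.N := by
  simp [ofISLP]

lemma ofISLP_getElem (G : ISLP α d) (j : ℕ) (hj : j < (ofISLP G).length) :
    (ofISLP G)[j] = fromRule (G.rule ⟨j, by simpa using hj⟩) := by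
  simp [ofISLP]

lemma fromRule_pvars (r : ISLPRule α N) : (fromRule r).pvars = r.vars.map Fin.val := by
  cases r <;> simp [fromRule, PR.pvars, ISLPRule.vars, List.map_map]

lemma fromRule_psize (r : ISLPRule α N) : (fromRule r).psize = r.size := by
  cases r <;> simp [fromRule, PR.psize, ISLPRule.size]

lemma ofISLP_size (G : ISLP α d) : progSize (ofISLP G) = G.size := by
  unfold progSize ofISLP ISLP.size
  rw [List.map_ofFn, List.sum_ofFn]
  exact Finset.sum_congr rfl fun A _ => fromRule_psize _

lemma ofISLP_valid (G : ISLP α d) : PValid d (ofISLP G) := by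
  intro j hj
  rw [ofISLP_getElem G j hj]
  constructor
  · intro v hv
    rw [fromRule_pvars] at hv
    obtain ⟨B, hB, rfl⟩ := List.mem_map.1 hv
    exact G.acyclic _ B hB
  · have hok := G.ok ⟨j, by simpa using hj⟩
    cases hR : G.rule ⟨j, by simpa using hj⟩ with
    | term a => trivial
    | pair B C => trivial
    | iter k1 k2 Bs =>
      rw [hR] at hok
      obtain ⟨h1, h2, h3, h4⟩ := hok
      refine ⟨h1, h2, by simpa [fromRule] using h3, ?_⟩
      intro p hp
      simp only [fromRule, List.mem_map] at hp
      obtain ⟨q, hq, rfl⟩ := hp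
      exact h4 q hq

lemma ofISLP_expands (G : ISLP α d) {A : Fin G.N} {w : List α}
    (h : ISLP.Expands G.rule A w) : PExpands (ofISLP G) A.val w := by
  induction h with
  | @term A a hA =>
    refine .term ?_
    rw [List.getElem?_eq_getElem (by simpa using A.isLt), ofISLP_getElem]
    simp [hA, fromRule]
  | @pair A B C u v hA hu hv ihu ihv =>
    refine .pair ?_ ihu ihv
    rw [List.getElem?_eq_getElem (by simpa using A.isLt), ofISLP_getElem]
    simp [hA, fromRule]
  | @iter A k1 k2 Bs ps hA hsnd hzip ih =>
    refine .iter (Bs := Bs.map fun p => (p.1.val, p.2)) (ps := ps) ?_ ?_ ?_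
    · rw [List.getElem?_eq_getElem (by simpa using A.isLt), ofISLP_getElem]
      simp [hA, fromRule]
    · rw [hsnd, List.map_map]; rfl
    · intro q hq
      obtain ⟨i, h1, h2, hq1, hq2⟩ := mem_zip_index hq
      have hlen : i < Bs.length := by simpa using h1
      have hmem : (Bs[i], ps[i]) ∈ Bs.zip ps := zip_getElem_mem hlen (by omega)
      have := ih _ hmem
      rw [hq1, hq2]
      simpa using this

end Programs
section Emission
variable {α : Type} {d : ℕ}

@[simp] lemma iterBlock_nil (i : ℕ) : iterBlock ([] : List (List α × ℕ)) i = [] := rfl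

lemma iterBlock_cons (q : List α × ℕ) (qs : List (List α × ℕ)) (i : ℕ) :
    iterBlock (q :: qs) i = repList q.1 (i ^ q.2) ++ iterBlock qs i := by
  simp [iterBlock]

lemma iterExpand_self (i : ℕ) (qs : List (List α × ℕ)) :
    iterExpand i i qs = iterBlock qs i := by
  simp [iterExpand]

lemma iterExpand_pow (w : List α) (r : ℕ) (hr : 1 ≤ r) :
    iterExpand 1 r [(w, 0)] = repList w r := by
  unfold iterExpand
  have h1 : (rangeK 1 r).map (iterBlock [(w, 0)]) = List.replicate r w := by
    apply List.ext_getElem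
    · simp; omega
    · intro m hm1 hm2
      simp only [List.getElem_map, List.getElem_replicate]
      simp [iterBlock]
  rw [h1]
  rfl

/-- `o` represents string `w` in program `L`. -/
def RepW (L : List (PR α)) (o : Option ℕ) (w : List α) : Prop :=
  (o = none → w = []) ∧ ∀ i, o = some i → i < L.length ∧ PExpands L i w

lemma repW_intro {L : List (PR α)} {w : List α} {i : ℕ}
    (h1 : i < L.length) (h2 : PExpands L i w) : RepW L (some i) w :=
  ⟨(fun hc => nomatch hc), fun k hk => by cases hk; exact ⟨h1, h2⟩⟩

lemma RepW.mono {L : List (PR α)} {ext : List (PR α)} {o : Option ℕ} {w : List α}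
    (h : RepW L o w) : RepW (L ++ ext) o w := by
  refine ⟨h.1, ?_⟩
  intro i hi
  obtain ⟨h1, h2⟩ := h.2 i hi
  exact ⟨by simp; omega, h2.mono⟩

lemma repW_none {L : List (PR α)} : RepW L none ([] : List α) :=
  ⟨fun _ => rfl, fun i hi => nomatch hi⟩

lemma getElem?_concat (L : List (PR α)) (r : PR α) : (L ++ [r])[L.length]? = some r := by
  rw [List.getElem?_append_right (le_refl _)]
  simp

/-- Context: `L` extends the base encoding of `G` correctly. -/
def GoodL (G : ISLP α d) (L : List (PR α)) : Prop :=
  PValid d L ∧ G.N ≤ L.length ∧ ∀ A : Fin G.N, PExpands L A.val (expOf G A)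

lemma GoodL.append {G : ISLP α d} {L ext : List (PR α)} (h : GoodL G L)
    (hv : PValid d (L ++ ext)) : GoodL G (L ++ ext) :=
  ⟨hv, by have := h.2.1; simp; omega, fun A => (h.2.2 A).mono⟩

lemma repW_var {G : ISLP α d} {L : List (PR α)} (h : GoodL G L) (B : Fin G.N) {w : List α}
    (hw : ISLP.Expands G.rule B w) : RepW L (some B.val) w := by
  refine repW_intro (by have := B.isLt; have := h.2.1; omega) ?_
  have := h.2.2 B
  rwa [expOf_eq hw] at this

lemma emit_cat {G : ISLP α d} {L : List (PR α)} (h : GoodL G L) {o1 o2 : Option ℕ}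
    {w1 w2 : List α} (h1 : RepW L o1 w1) (h2 : RepW L o2 w2) :
    ∃ L' o, (∃ ext, L' = L ++ ext) ∧ GoodL G L' ∧ progSize L' ≤ progSize L + 2 ∧
      RepW L' o (w1 ++ w2) := by
  match o1, o2 with
  | none, o2 =>
    refine ⟨L, o2, ⟨[], by simp⟩, h, by omega, ?_⟩
    rw [h1.1 rfl]
    simpa using h2
  | some i, none =>
    refine ⟨L, some i, ⟨[], by simp⟩, h, by omega, ?_⟩
    rw [h2.1 rfl]
    simpa using h1
  | some i, some j =>
    obtain ⟨hi, hei⟩ := h1.2 i rfl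
    obtain ⟨hj, hej⟩ := h2.2 j rfl
    refine ⟨L ++ [.pair i j], some L.length, ⟨_, rfl⟩, ?_, ?_, ?_⟩
    · exact h.append (pvalid_append h.1 (by simp [PR.pvars]; omega) trivial)
    · simp [progSize, PR.psize]
    · exact repW_intro (by simp) (.pair (getElem?_concat L _) hei.mono hej.mono)

lemma emit_pow {G : ISLP α d} {L : List (PR α)} (h : GoodL G L) {i : ℕ} {w : List α}
    (hi : i < L.length) (hw : PExpands L i w) (r : ℕ) :
    ∃ L' o, (∃ ext, L' = L ++ ext) ∧ GoodL G L' ∧ progSize L' ≤ progSize L + 4 ∧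
      RepW L' o (repList w r) := by
  rcases Nat.eq_zero_or_pos r with rfl | hr
  · exact ⟨L, none, ⟨[], by simp⟩, h, by omega, by simpa using repW_none⟩
  · refine ⟨L ++ [.iter 1 r [(i, 0)]], some L.length, ⟨_, rfl⟩, ?_, ?_, ?_⟩
    · refine h.append (pvalid_append h.1 (by simp [PR.pvars]; omega) ?_)
      exact ⟨le_refl _, hr, by simp, by simp⟩
    · simp [progSize, PR.psize]
    · refine repW_intro (by simp) ?_
      rw [← iterExpand_pow w r hr]
      refine .iter (ps := [(w, 0)]) (getElem?_concat L _) (by simp) ?_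
      intro q hq
      simp at hq
      rw [hq]
      exact hw.mono

lemma emit_term {G : ISLP α d} {L : List (PR α)} (h : GoodL G L) (a : α) :
    ∃ L' o, (∃ ext, L' = L ++ ext) ∧ GoodL G L' ∧ progSize L' ≤ progSize L + 1 ∧
      RepW L' o [a] := by
  refine ⟨L ++ [.term a], some L.length, ⟨_, rfl⟩, ?_, ?_, ?_⟩
  · exact h.append (pvalid_append h.1 (by simp [PR.pvars]) trivial)
  · simp [progSize, PR.psize]
  · exact repW_intro (by simp) (.term (getElem?_concat L _))

/-- Emit an iteration rule `∏_{i=a}^{b} B_1^{i^{c_1}}⋯` over original variables of `G`. -/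
lemma emit_iter {G : ISLP α d} {L : List (PR α)} (h : GoodL G L) {a b : ℕ}
    (ha : 1 ≤ a) (hb : 1 ≤ b) {Bs : List (Fin G.N × ℕ)} {ps : List (List α × ℕ)}
    (hBs : Bs ≠ []) (hd : ∀ p ∈ Bs, p.2 ≤ d)
    (hsnd : ps.map Prod.snd = Bs.map Prod.snd)
    (hzip : ∀ q ∈ Bs.zip ps, ISLP.Expands G.rule q.1.1 q.2.1) :
    ∃ L' o, (∃ ext, L' = L ++ ext) ∧ GoodL G L' ∧
      progSize L' ≤ progSize L + 2 + 2 * Bs.length ∧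
      RepW L' o (iterExpand a b ps) := by
  have hval : PValid d (L ++ [PR.iter a b (Bs.map fun p => (p.1.val, p.2))]) := by
    refine pvalid_append h.1 ?_ ?_
    · intro v hv
      simp only [PR.pvars, List.map_map, List.mem_map] at hv
      obtain ⟨p, hp, rfl⟩ := hv
      have := p.1.isLt
      have := h.2.1
      simp only [Function.comp]
      omega
    · refine ⟨ha, hb, by simpa using hBs, ?_⟩
      intro p hp
      simp only [List.mem_map] at hp
      obtain ⟨q, hq, rfl⟩ := hp
      exact hd q hq
  have hgood : GoodL G (L ++ [PR.iter a b (Bs.map fun p => (p.1.val, p.2))]) :=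
    h.append hval
  refine ⟨L ++ [.iter a b (Bs.map fun p => (p.1.val, p.2))], some L.length, ⟨_, rfl⟩,
    hgood, ?_, ?_⟩
  · simp [progSize, PR.psize]
    omega
  · refine repW_intro (by simp) ?_
    refine .iter (ps := ps) (getElem?_concat L _) ?_ ?_
    · rw [hsnd, List.map_map]; rfl
    · intro q hq
      obtain ⟨idx, h1, h2, hq1, hq2⟩ := mem_zip_index hq
      have hiB : idx < Bs.length := by simpa using h1
      have hmem : (Bs[idx], ps[idx]) ∈ Bs.zip ps := zip_getElem_mem hiB (by omega)
      have hexp := hzip _ hmem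
      have hrep := repW_var hgood Bs[idx].1 hexp
      obtain ⟨_, hpe⟩ := hrep.2 _ rfl
      rw [hq1, hq2]
      simpa using hpe

end Emission
section SplitHelpers
variable {α : Type} {d : ℕ}

/-- Sum of rule sizes of variables `≤ A`. -/
def SB (G : ISLP α d) (A : Fin G.N) : ℕ := ∑ B ∈ Finset.Iic A, (G.rule B).size

lemma rule_size_pos {N : ℕ} (r : ISLPRule α N) : 1 ≤ r.size := by
  cases r <;> simp [ISLPRule.size] <;> omega

lemma SB_le_size (G : ISLP α d) (A : Fin G.N) : SB G A ≤ G.size :=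
  Finset.sum_le_sum_of_subset (Finset.subset_univ _)

lemma SB_mono_lt (G : ISLP α d) {B A : Fin G.N} (h : B < A) :
    SB G B + (G.rule A).size ≤ SB G A := by
  have hnot : A ∉ Finset.Iic B := by
    simp only [Finset.mem_Iic]
    exact fun hc => absurd h (not_lt.2 hc)
  have hsub : insert A (Finset.Iic B) ⊆ Finset.Iic A := by
    intro C hC
    simp only [Finset.mem_insert, Finset.mem_Iic] at hC ⊢
    rcases hC with rfl | hC
    · exact le_refl _
    · exact le_of_lt (lt_of_le_of_lt hC h)
  have hcalc : SB G B + (G.rule A).size = ∑ C ∈ insert A (Finset.Iic B), (G.rule C).size := by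
    rw [Finset.sum_insert hnot]
    unfold SB
    omega
  rw [hcalc]
  exact Finset.sum_le_sum_of_subset hsub

lemma SB_rule_le (G : ISLP α d) (A : Fin G.N) : (G.rule A).size ≤ SB G A :=
  Finset.single_le_sum (f := fun B => (G.rule B).size) (fun _ _ => Nat.zero_le _)
    (Finset.mem_Iic.2 (le_refl A))

lemma zip_take_sub {β γ : Type*} {l1 : List β} {l2 : List γ} {n : ℕ} {q : β × γ}
    (h : q ∈ (l1.take n).zip (l2.take n)) : q ∈ l1.zip l2 := by
  obtain ⟨i, h1, h2, hq1, hq2⟩ := mem_zip_index h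
  have h1' : i < l1.length := by simp at h1; omega
  have h2' : i < l2.length := by simp at h2; omega
  have e1 : (l1.take n)[i] = l1[i] := List.getElem_take
  have e2 : (l2.take n)[i] = l2[i] := List.getElem_take
  have : q = (l1[i], l2[i]) := by
    rw [Prod.ext_iff]
    exact ⟨by rw [hq1, e1], by rw [hq2, e2]⟩
  rw [this]
  exact zip_getElem_mem h1' h2'

lemma zip_drop_sub {β γ : Type*} {l1 : List β} {l2 : List γ} {n : ℕ} {q : β × γ}
    (h : q ∈ (l1.drop n).zip (l2.drop n)) : q ∈ l1.zip l2 := by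
  obtain ⟨i, h1, h2, hq1, hq2⟩ := mem_zip_index h
  have h1' : n + i < l1.length := by simp at h1; omega
  have h2' : n + i < l2.length := by simp at h2; omega
  have e1 : (l1.drop n)[i] = l1[n + i] := List.getElem_drop
  have e2 : (l2.drop n)[i] = l2[n + i] := List.getElem_drop
  have : q = (l1[n + i], l2[n + i]) := by
    rw [Prod.ext_iff]
    exact ⟨by rw [hq1, e1], by rw [hq2, e2]⟩
  rw [this]
  exact zip_getElem_mem h1' h2'

/-- Emit a representation of a partial block `∏_{j < j2} w_j^{i^{c_j}}`. -/
lemma emit_block {G : ISLP α d} {L : List (PR α)} (hL : GoodL G L) {i : ℕ} (hi : 1 ≤ i)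
    {Bs' : List (Fin G.N × ℕ)} {ps' : List (List α × ℕ)}
    (hdle : ∀ p ∈ Bs', p.2 ≤ d)
    (hsnd : ps'.map Prod.snd = Bs'.map Prod.snd)
    (hzip : ∀ q ∈ Bs'.zip ps', ISLP.Expands G.rule q.1.1 q.2.1) :
    ∃ L' o, (∃ ext, L' = L ++ ext) ∧ GoodL G L' ∧
      progSize L' ≤ progSize L + 2 + 2 * Bs'.length ∧
      RepW L' o (iterBlock ps' i) := by
  rcases List.eq_nil_or_concat' Bs' with rfl | h
  · have hps' : ps' = [] := by
      have := congrArg List.length hsnd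
      simpa using this
    subst hps'
    exact ⟨L, none, ⟨[], by simp⟩, hL, by omega, by simpa using repW_none⟩
  · have hne : Bs' ≠ [] := by
      obtain ⟨l, b, rfl⟩ := h
      simp
    obtain ⟨L', o, hext, hgood, hsz, hrep⟩ := emit_iter hL hi hi hne hdle hsnd hzip
    rw [iterExpand_self] at hrep
    exact ⟨L', o, hext, hgood, hsz, hrep⟩

/-- Emit a representation of a sub-range `∏_{i ∈ R} block(i)` where `R` is `[]` or a range. -/
lemma emit_rangePart {G : ISLP α d} {L : List (PR α)} (hL : GoodL G L) {R : List ℕ}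
    (hR : R = [] ∨ ∃ a b, 1 ≤ a ∧ 1 ≤ b ∧ R = rangeK a b)
    {Bs : List (Fin G.N × ℕ)} {ps : List (List α × ℕ)}
    (hBsne : Bs ≠ []) (hdle : ∀ p ∈ Bs, p.2 ≤ d)
    (hsnd : ps.map Prod.snd = Bs.map Prod.snd)
    (hzip : ∀ q ∈ Bs.zip ps, ISLP.Expands G.rule q.1.1 q.2.1) :
    ∃ L' o, (∃ ext, L' = L ++ ext) ∧ GoodL G L' ∧
      progSize L' ≤ progSize L + 2 + 2 * Bs.length ∧
      RepW L' o ((R.map (iterBlock ps)).flatten) := by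
  rcases hR with rfl | ⟨a, b, ha, hb, rfl⟩
  · exact ⟨L, none, ⟨[], by simp⟩, hL, by omega, by simpa using repW_none⟩
  · obtain ⟨L', o, hext, hgood, hsz, hrep⟩ := emit_iter hL ha hb hBsne hdle hsnd hzip
    exact ⟨L', o, hext, hgood, hsz, hrep⟩

end SplitHelpers
section SplitMain
variable {α : Type} {d : ℕ}

lemma split_main (G : ISLP α d) :
    ∀ n0 : ℕ, ∀ A : Fin G.N, A.val < n0 → ∀ w : List α, ISLP.Expands G.rule A w →
    ∀ n : ℕ, n ≤ w.length → ∀ L : List (PR α), GoodL G L →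
    ∃ L' o1 o2, (∃ ext, L' = L ++ ext) ∧ GoodL G L' ∧
      progSize L' ≤ progSize L + 16 * SB G A ∧
      RepW L' o1 (w.take n) ∧ RepW L' o2 (w.drop n) := by
  intro n0
  induction n0 with
  | zero => intro A hA; omega
  | succ n0 ih =>
    intro A hA w hw n hn L hL
    rcases Nat.eq_zero_or_pos n with rfl | hn0
    · refine ⟨L, none, some A.val, ⟨[], by simp⟩, hL, by omega, by simpa using repW_none, ?_⟩
      simpa using repW_var hL A hw
    rcases eq_or_lt_of_le hn with rfl | hnlt
    · refine ⟨L, some A.val, none, ⟨[], by simp⟩, hL, by omega, ?_, by simpa using repW_none⟩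
      simpa using repW_var hL A hw
    cases hw with
    | @term _ a hR =>
      simp at hnlt
      omega
    | @pair _ B C u v hR hu hv =>
      have hB : B < A := G.acyclic A B (by simp [hR, ISLPRule.vars])
      have hC : C < A := G.acyclic A C (by simp [hR, ISLPRule.vars])
      have hBv : B.val < A.val := hB
      have hCv : C.val < A.val := hC
      have hsA : (G.rule A).size = 2 := by rw [hR]; rfl
      by_cases hc : n ≤ u.length
      · obtain ⟨L1, o1, o2, ⟨ext1, rfl⟩, hL1, hsz1, hr1, hr2⟩ :=
          ih B (by omega) u hu n hc L hL
        have hrC : RepW (L ++ ext1) (some C.val) v := repW_var hL1 C hv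
        obtain ⟨L2, oc, ⟨ext2, rfl⟩, hL2, hsz2, hrc⟩ := emit_cat hL1 hr2 hrC
        refine ⟨_, o1, oc, ⟨ext1 ++ ext2, by rw [List.append_assoc]⟩, hL2, ?_, ?_, ?_⟩
        · have h3 := SB_mono_lt G hB
          rw [hsA] at h3
          omega
        · rw [List.take_append_of_le_length hc]
          exact hr1.mono
        · rw [List.drop_append_of_le_length hc]
          exact hrc
      · push_neg at hc
        have hlen : (u ++ v).length = u.length + v.length := by simp
        have hnv : n - u.length ≤ v.length := by omega
        obtain ⟨L1, o1, o2, ⟨ext1, rfl⟩, hL1, hsz1, hr1, hr2⟩ :=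
          ih C (by omega) v hv (n - u.length) hnv L hL
        have hrB : RepW (L ++ ext1) (some B.val) u := repW_var hL1 B hu
        obtain ⟨L2, oc, ⟨ext2, rfl⟩, hL2, hsz2, hrc⟩ := emit_cat hL1 hrB hr1
        refine ⟨_, oc, o2, ⟨ext1 ++ ext2, by rw [List.append_assoc]⟩, hL2, ?_, ?_, ?_⟩
        · have h3 := SB_mono_lt G hC
          rw [hsA] at h3
          omega
        · have heq : (u ++ v).take n = u ++ v.take (n - u.length) := by
            rw [List.take_append, List.take_of_length_le (by omega)]
          rw [heq]
          exact hrc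
        · have heq : (u ++ v).drop n = v.drop (n - u.length) := by
            rw [List.drop_append, List.drop_eq_nil_of_le (by omega)]
            simp
          rw [heq]
          exact hr2.mono
    | @iter _ k1 k2 Bs ps hR hsnd hzip =>
      have hok := G.ok A
      rw [hR] at hok
      obtain ⟨hk1, hk2, hBsne, hdle⟩ := hok
      have hsA : (G.rule A).size = 2 + 2 * Bs.length := by rw [hR]; rfl
      have hpslen : ps.length = Bs.length := by
        have := congrArg List.length hsnd; simpa using this
      have hpsne : ps ≠ [] := by
        intro hc
        apply hBsne
        subst hc
        simpa using hpslen.symm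
      set Ls := (rangeK k1 k2).map (iterBlock ps) with hLs
      have hLsne : Ls ≠ [] := by
        simp [hLs]
        exact rangeK_ne_nil k1 k2
      obtain ⟨j, hj, m1, hm1, htake1, hdrop1⟩ :=
        flatten_split Ls n hLsne (Nat.le_of_lt hnlt)
      have hjr : j < (rangeK k1 k2).length := by simpa [hLs] using hj
      set i := (rangeK k1 k2)[j]'hjr with hidef
      have hLsj : Ls[j]'hj = iterBlock ps i := by
        simp [hLs, hidef]
      obtain ⟨hi1, htk, hdp⟩ := rangeK_decomp k1 k2 j hk1 hk2 hjr
      have hi1' : 1 ≤ i := by rw [hidef]; exact hi1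
      set Ms := ps.map (fun q => repList q.1 (i ^ q.2)) with hMs
      have hMsne : Ms ≠ [] := by simpa [hMs] using hpsne
      have hblock : iterBlock ps i = Ms.flatten := rfl
      rw [hLsj, hblock] at hm1
      obtain ⟨j2, hj2, m2, hm2, htake2, hdrop2⟩ := flatten_split Ms m1 hMsne hm1
      have hj2p : j2 < ps.length := by simpa [hMs] using hj2
      have hj2B : j2 < Bs.length := by omega
      have hMsj2 : Ms[j2]'hj2 = repList (ps[j2]'hj2p).1 (i ^ (ps[j2]'hj2p).2) := by
        simp [hMs]
      have he : 1 ≤ i ^ (ps[j2]'hj2p).2 := Nat.one_le_pow _ _ (by omega)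
      rw [hMsj2] at hm2
      obtain ⟨r, m3, hre, hm3, htake3, hdrop3⟩ := repList_split _ _ m2 he hm2
      clear_value Ls i Ms
      have hBj : (Bs[j2]'hj2B).1 < A := by
        apply G.acyclic A
        rw [hR]
        exact List.mem_map_of_mem (f := Prod.fst) (List.getElem_mem hj2B)
      have hBjv : (Bs[j2]'hj2B).1.val < A.val := hBj
      have hwj : ISLP.Expands G.rule (Bs[j2]'hj2B).1 (ps[j2]'hj2p).1 :=
        hzip _ (zip_getElem_mem hj2B hj2p)
      -- recurse on the inner variable
      obtain ⟨L1, oin1, oin2, ⟨ext1, rfl⟩, hL1, hsz1, hrin1, hrin2⟩ :=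
        ih (Bs[j2]'hj2B).1 (by omega) _ hwj m3 hm3 L hL
      -- emit range prefix
      obtain ⟨L2, or1, ⟨ext2, rfl⟩, hL2, hsz2, hr_r1⟩ :=
        emit_rangePart hL1 htk hBsne hdle hsnd hzip
      -- emit block prefix
      obtain ⟨L3, ob1, ⟨ext3, rfl⟩, hL3, hsz3, hr_b1⟩ :=
        emit_block (Bs' := Bs.take j2) (ps' := ps.take j2) hL2 hi1'
          (fun p hp => hdle p (List.take_subset _ _ hp))
          (by rw [List.map_take, List.map_take, hsnd])
          (fun q hq => hzip q (zip_take_sub hq))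
      -- emit prefix power
      obtain ⟨hlt1, hpe1⟩ := (repW_var hL3 (Bs[j2]'hj2B).1 hwj).2 _ rfl
      obtain ⟨L4, op1, ⟨ext4, rfl⟩, hL4, hsz4, hr_p1⟩ := emit_pow hL3 hlt1 hpe1 r
      -- emit suffix power
      obtain ⟨hlt2, hpe2⟩ := (repW_var hL4 (Bs[j2]'hj2B).1 hwj).2 _ rfl
      obtain ⟨L5, op2, ⟨ext5, rfl⟩, hL5, hsz5, hr_p2⟩ :=
        emit_pow hL4 hlt2 hpe2 (i ^ (ps[j2]'hj2p).2 - r - 1)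
      -- emit suffix block
      obtain ⟨L6, ob2, ⟨ext6, rfl⟩, hL6, hsz6, hr_b2⟩ :=
        emit_block (Bs' := Bs.drop (j2+1)) (ps' := ps.drop (j2+1)) hL5 hi1'
          (fun p hp => hdle p (List.drop_subset _ _ hp))
          (by rw [List.map_drop, List.map_drop, hsnd])
          (fun q hq => hzip q (zip_drop_sub hq))
      -- emit range suffix
      obtain ⟨L7, or2, ⟨ext7, rfl⟩, hL7, hsz7, hr_r2⟩ :=
        emit_rangePart hL6 hdp hBsne hdle hsnd hzip
      -- concatenations, prefix
      obtain ⟨Lc1, oc1, ⟨extc1, rfl⟩, hLc1, hszc1, hrc1⟩ :=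
        emit_cat hL7 hr_p1.mono.mono.mono hrin1.mono.mono.mono.mono.mono.mono
      obtain ⟨Lc2, oc2, ⟨extc2, rfl⟩, hLc2, hszc2, hrc2⟩ :=
        emit_cat hLc1 hr_b1.mono.mono.mono.mono.mono hrc1
      obtain ⟨Lc3, oc3, ⟨extc3, rfl⟩, hLc3, hszc3, hrc3⟩ :=
        emit_cat hLc2 hr_r1.mono.mono.mono.mono.mono.mono.mono hrc2
      -- concatenations, suffix
      obtain ⟨Lc4, oc4, ⟨extc4, rfl⟩, hLc4, hszc4, hrc4⟩ :=
        emit_cat hLc3 hrin2.mono.mono.mono.mono.mono.mono.mono.mono.mono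
          hr_p2.mono.mono.mono.mono.mono
      obtain ⟨Lc5, oc5, ⟨extc5, rfl⟩, hLc5, hszc5, hrc5⟩ :=
        emit_cat hLc4 hr_b2.mono.mono.mono.mono.mono hr_r2.mono.mono.mono.mono
      obtain ⟨Lc6, oc6, ⟨extc6, rfl⟩, hLc6, hszc6, hrc6⟩ :=
        emit_cat hLc5 hrc4.mono hrc5
      -- final equalities
      have hpre : (iterExpand k1 k2 ps).take n =
          ((((rangeK k1 k2).take j).map (iterBlock ps)).flatten) ++
          (iterBlock (ps.take j2) i ++
            (repList (ps[j2]'hj2p).1 r ++ (ps[j2]'hj2p).1.take m3)) := by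
        have h1 := htake1
        rw [hLsj, hblock, htake2, hMsj2, htake3] at h1
        rw [hLs] at h1
        rw [← List.map_take] at h1
        rw [hMs] at h1
        rw [← List.map_take] at h1
        exact h1
      have hsuf : (iterExpand k1 k2 ps).drop n =
          (((ps[j2]'hj2p).1.drop m3 ++ repList (ps[j2]'hj2p).1 (i ^ (ps[j2]'hj2p).2 - r - 1)) ++
            iterBlock (ps.drop (j2+1)) i) ++
          (((rangeK k1 k2).drop (j+1)).map (iterBlock ps)).flatten := by
        have h1 := hdrop1
        rw [hLsj, hblock, hdrop2, hMsj2, hdrop3] at h1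
        rw [hLs] at h1
        rw [← List.map_drop] at h1
        rw [hMs] at h1
        rw [← List.map_drop] at h1
        show (List.map (iterBlock ps) (rangeK k1 k2)).flatten.drop n = _
        rw [h1]
        simp [iterBlock, List.append_assoc]
      refine ⟨_, oc3, oc6, ?_, hLc6, ?_, ?_, ?_⟩
      · refine ⟨ext1 ++ ext2 ++ ext3 ++ ext4 ++ ext5 ++ ext6 ++ ext7 ++
          extc1 ++ extc2 ++ extc3 ++ extc4 ++ extc5 ++ extc6, ?_⟩
        simp [List.append_assoc]
      · have h3 := SB_mono_lt G hBj
        rw [hsA] at h3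
        have ht1 : (Bs.take j2).length ≤ Bs.length := by
          rw [List.length_take]; omega
        have ht2 : (Bs.drop (j2+1)).length ≤ Bs.length := by
          rw [List.length_drop]; omega
        omega
      · rw [hpre]
        simpa [List.append_assoc] using hrc3.mono.mono.mono
      · rw [hsuf]
        simpa [List.append_assoc] using hrc6

end SplitMain

/-- There is a universal constant `C` such that for every
`d ≥ 0`, every `d`-ISLP of size `g` generating `T`, and every nonempty `T'`
at edit distance one from `T`, some `d`-ISLP of size at most `C·g`
generates `T'`. -/
theorem islp_edit :
    ∃ C : ℕ, ∀ (α : Type) [Fintype α] (d : ℕ) (G : ISLP α d) (T T' : List α),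
      G.Generates T → IsEdit T T' → T' ≠ [] →
      ∃ G' : ISLP α d, G'.Generates T' ∧ G'.size ≤ C * G.size := by
  classical
  refine ⟨50, ?_⟩
  intro α _ d G T T' hGen hedit hne
  have hL0 : GoodL G (ofISLP G) :=
    ⟨ofISLP_valid G, by simp, fun A => ofISLP_expands G (expOf_spec G A)⟩
  have hbase : progSize (ofISLP G) = G.size := ofISLP_size G
  have hg1 : 1 ≤ G.size := by
    have h1 := Finset.single_le_sum (f := fun B : Fin G.N => (G.rule B).size)
      (fun _ _ => Nat.zero_le _) (Finset.mem_univ G.start)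
    have h2 := rule_size_pos (G.rule G.start)
    exact le_trans h2 h1
  have hsplit : ∀ (L : List (PR α)), GoodL G L → ∀ n, n ≤ T.length →
      ∃ L' o1 o2, (∃ ext, L' = L ++ ext) ∧ GoodL G L' ∧
        progSize L' ≤ progSize L + 16 * G.size ∧
        RepW L' o1 (T.take n) ∧ RepW L' o2 (T.drop n) := by
    intro L hL n hn
    obtain ⟨L', o1, o2, hext, hG, hsz, h1, h2⟩ :=
      split_main G (G.start.val + 1) G.start (Nat.lt_succ_self _) T hGen n hn L hL
    refine ⟨L', o1, o2, hext, hG, ?_, h1, h2⟩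
    have := SB_le_size G G.start
    omega
  have key : ∃ Lf o, PValid d Lf ∧ progSize Lf ≤ 50 * G.size ∧ RepW Lf o T' := by
    rcases hedit with ⟨u, v, x, y, hT, hT'⟩ | ⟨u, v, y, hT, hT'⟩ | ⟨u, v, x, hT, hT'⟩
    · -- substitution
      subst hT; subst hT'
      have hlen : (u ++ x :: v).length = u.length + v.length + 1 := by simp; omega
      obtain ⟨L1, o1, o2, ⟨e1, rfl⟩, hL1, hsz1, hr1, hr2⟩ :=
        hsplit _ hL0 u.length (by omega)
      obtain ⟨L2, o3, o4, ⟨e2, rfl⟩, hL2, hsz2, hr3, hr4⟩ :=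
        hsplit _ hL1 (u.length + 1) (by omega)
      obtain ⟨L3, oy, ⟨e3, rfl⟩, hL3, hsz3, hry⟩ := emit_term hL2 y
      have htu : (u ++ x :: v).take u.length = u := by
        simpa using List.take_left u (x :: v)
      have hdv : (u ++ x :: v).drop (u.length + 1) = v := by
        rw [show u ++ x :: v = (u ++ [x]) ++ v by simp]
        rw [show u.length + 1 = (u ++ [x]).length by simp]
        simpa using List.drop_left (u ++ [x]) v
      rw [htu] at hr1
      rw [hdv] at hr4
      obtain ⟨L4, oc1, ⟨e4, rfl⟩, hL4, hsz4, hrc1⟩ := emit_cat hL3 hry hr4.mono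
      obtain ⟨L5, oc2, ⟨e5, rfl⟩, hL5, hsz5, hrc2⟩ :=
        emit_cat hL4 hr1.mono.mono.mono hrc1
      refine ⟨_, oc2, hL5.1, by omega, ?_⟩
      rw [show u ++ y :: v = u ++ ([y] ++ v) by simp]
      exact hrc2
    · -- insertion
      subst hT; subst hT'
      have hlen : (u ++ v).length = u.length + v.length := by simp
      obtain ⟨L1, o1, o2, ⟨e1, rfl⟩, hL1, hsz1, hr1, hr2⟩ :=
        hsplit _ hL0 u.length (by omega)
      obtain ⟨L2, oy, ⟨e2, rfl⟩, hL2, hsz2, hry⟩ := emit_term hL1 y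
      have htu : (u ++ v).take u.length = u := by
        simpa using List.take_left u v
      have hdv : (u ++ v).drop u.length = v := by
        simpa using List.drop_left u v
      rw [htu] at hr1
      rw [hdv] at hr2
      obtain ⟨L3, oc1, ⟨e3, rfl⟩, hL3, hsz3, hrc1⟩ := emit_cat hL2 hry hr2.mono
      obtain ⟨L4, oc2, ⟨e4, rfl⟩, hL4, hsz4, hrc2⟩ :=
        emit_cat hL3 hr1.mono.mono hrc1
      refine ⟨_, oc2, hL4.1, by omega, ?_⟩
      rw [show u ++ y :: v = u ++ ([y] ++ v) by simp]
      exact hrc2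
    · -- deletion
      subst hT; subst hT'
      have hlen : (u ++ x :: v).length = u.length + v.length + 1 := by simp; omega
      obtain ⟨L1, o1, o2, ⟨e1, rfl⟩, hL1, hsz1, hr1, hr2⟩ :=
        hsplit _ hL0 u.length (by omega)
      obtain ⟨L2, o3, o4, ⟨e2, rfl⟩, hL2, hsz2, hr3, hr4⟩ :=
        hsplit _ hL1 (u.length + 1) (by omega)
      have htu : (u ++ x :: v).take u.length = u := by
        simpa using List.take_left u (x :: v)
      have hdv : (u ++ x :: v).drop (u.length + 1) = v := by
        rw [show u ++ x :: v = (u ++ [x]) ++ v by simp]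
        rw [show u.length + 1 = (u ++ [x]).length by simp]
        simpa using List.drop_left (u ++ [x]) v
      rw [htu] at hr1
      rw [hdv] at hr4
      obtain ⟨L3, oc1, ⟨e3, rfl⟩, hL3, hsz3, hrc1⟩ := emit_cat hL2 hr1.mono hr4
      exact ⟨_, oc1, hL3.1, by omega, hrc1⟩
  obtain ⟨Lf, o, hval, hsz, hrep⟩ := key
  rcases o with _ | s
  · exact absurd (hrep.1 rfl) hne
  · obtain ⟨hs, hexp⟩ := hrep.2 s rfl
    refine ⟨toISLP d Lf hval s hs, ?_, ?_⟩
    · exact toISLP_expands d Lf hval s hs hexp hs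
    · rw [toISLP_size]
      omega
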